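/- Let K₁ be an infinite field and G ≤ GL_n a connected linear algebraic group over K₁ such that K₁ is perfect or G is reductive. Let K₂/K₁ be a field extension and H ⊆ G a closed subvariety defined over K₂((t)). If for every g ∈ G(K₁) there exists h ∈ H(K₂[[t]]) of the form h = g + M₁t + M₂t² + … with M_i ∈ M_n(K₂), then H = G. -/

import Mathlib

noncomputable section

/-- The algebraic closure of the Laurent series field `K₂((t))`. -/
abbrev Kt (K₂ : Type*) [Field K₂] := AlgebraicClosure (LaurentSeries K₂)

/-- The canonical embedding `K₂[[t]] → overline{K₂((t))}`. -/
noncomputable def psToKt (K₂ : Type*) [Field K₂] : PowerSeries K₂ →+* Kt K₂ :=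
  (algebraMap (LaurentSeries K₂) (Kt K₂)).comp (HahnSeries.ofPowerSeries ℤ K₂)

/-- The canonical embedding `K₂ → overline{K₂((t))}`. -/
noncomputable def k2ToKt (K₂ : Type*) [Field K₂] : K₂ →+* Kt K₂ :=
  (psToKt K₂).comp (PowerSeries.C (R := K₂))

namespace Stmt12Aux

open MvPolynomial

/-- Pushing a ring hom through `MvPolynomial.eval`. -/
theorem hom_eval {σ R S : Type*} [CommSemiring R] [CommSemiring S] (φ : R →+* S)
    (y : σ → R) (p : MvPolynomial σ R) :
    φ (MvPolynomial.eval y p) = MvPolynomial.eval (φ ∘ y) (p.map φ) := by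
  rw [MvPolynomial.eval_map]
  have h := MvPolynomial.eval₂_comp_left φ (RingHom.id R) y p
  rw [RingHom.comp_id] at h
  rw [← h]
  rfl

variable {K : Type*} [Field K] {σ : Type*}

/-- drop the constant coefficient and divide by `X` -/
def psShift (c : PowerSeries K) : PowerSeries K :=
  PowerSeries.mk fun n => PowerSeries.coeff (R := K) (n + 1) c

@[simp] theorem coeff_psShift (c : PowerSeries K) (n : ℕ) :
    PowerSeries.coeff (R := K) n (psShift c) = PowerSeries.coeff (R := K) (n + 1) c :=
  PowerSeries.coeff_mk _ _

@[simp] theorem psShift_zero : psShift (0 : PowerSeries K) = 0 := by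
  ext n; simp

theorem psShift_decomp (c : PowerSeries K) :
    PowerSeries.C (R := K) (PowerSeries.constantCoeff (R := K) c) + PowerSeries.X * psShift c = c := by
  ext n
  cases n with
  | zero => simp
  | succ n => simp [PowerSeries.coeff_C, PowerSeries.coeff_succ_X_mul]

/-- coefficient-wise `psShift` on polynomials -/
def pShift (p : MvPolynomial σ (PowerSeries K)) : MvPolynomial σ (PowerSeries K) :=
  ∑ α ∈ p.support, monomial α (psShift (coeff α p))

@[simp] theorem coeff_pShift (p : MvPolynomial σ (PowerSeries K)) (β : σ →₀ ℕ) :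
    coeff β (pShift p) = psShift (coeff β p) := by
  classical
  rw [pShift, coeff_sum]
  simp only [coeff_monomial]
  rw [show (∑ x ∈ p.support, if x = β then psShift (coeff x p) else 0)
      = ∑ x ∈ p.support, if x = β then psShift (coeff β p) else 0 from
    Finset.sum_congr rfl (fun x _ => by split <;> simp_all),
    Finset.sum_ite_eq' p.support β (fun _ => psShift (coeff β p))]
  by_cases h : β ∈ p.support
  · simp [h]
  · simp [h, MvPolynomial.notMem_support_iff.1 h]

theorem pShift_decomp (p : MvPolynomial σ (PowerSeries K)) :
    (p.map (PowerSeries.constantCoeff (R := K))).map (PowerSeries.C (R := K))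
      + C PowerSeries.X * pShift p = p := by
  apply MvPolynomial.ext
  intro β
  rw [coeff_add, coeff_map, coeff_map, coeff_C_mul, coeff_pShift, psShift_decomp]

/-- the `n`-th slice of a polynomial with power series coefficients -/
def sliceN (n : ℕ) (p : MvPolynomial σ (PowerSeries K)) : MvPolynomial σ K :=
  (pShift^[n] p).map (PowerSeries.constantCoeff (R := K))

@[simp] theorem coeff_sliceN (n : ℕ) (p : MvPolynomial σ (PowerSeries K)) (β : σ →₀ ℕ) :
    coeff β (sliceN n p) = PowerSeries.coeff (R := K) n (coeff β p) := by
  induction n generalizing p with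
  | zero => simp [sliceN, coeff_map, PowerSeries.coeff_zero_eq_constantCoeff]
  | succ n ih =>
    rw [sliceN, Function.iterate_succ_apply, ← sliceN, ih, coeff_pShift, coeff_psShift]


theorem exists_single_mul (c : LaurentSeries K) (N : ℤ) (hN : N ≤ c.order) :
    ∃ d : PowerSeries K, c = HahnSeries.single N 1 * HahnSeries.ofPowerSeries ℤ K d := by
  by_cases hc : c = 0
  · exact ⟨0, by simp [hc]⟩
  · refine ⟨PowerSeries.X ^ (c.order - N).toNat * c.powerSeriesPart, ?_⟩
    rw [map_mul, HahnSeries.ofPowerSeries_X_pow, ← mul_assoc, HahnSeries.single_mul_single,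
      mul_one]
    rw [show N + ((c.order - N).toNat : ℤ) = c.order by omega]
    exact (LaurentSeries.single_order_mul_powerSeriesPart c).symm

theorem exists_laurent_decomp (f : MvPolynomial σ (LaurentSeries K)) :
    ∃ (N : ℤ) (P : MvPolynomial σ (PowerSeries K)),
      f = C (HahnSeries.single N 1) * P.map (HahnSeries.ofPowerSeries ℤ K) := by
  classical
  by_cases hf : f = 0
  · exact ⟨0, 0, by simp [hf]⟩
  · have hne : f.support.Nonempty := MvPolynomial.support_nonempty.2 hf
    set N := f.support.inf' hne (fun α => (coeff α f).order) with hNdEf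
    have hNle : ∀ α ∈ f.support, N ≤ (coeff α f).order := fun α hα =>
      Finset.inf'_le _ hα
    have hch : ∀ α : σ →₀ ℕ, ∃ d : PowerSeries K,
        (α ∈ f.support → coeff α f = HahnSeries.single N 1 * HahnSeries.ofPowerSeries ℤ K d) := by
      intro α
      by_cases hα : α ∈ f.support
      · obtain ⟨d, hd⟩ := exists_single_mul (coeff α f) N (hNle α hα)
        exact ⟨d, fun _ => hd⟩
      · exact ⟨0, fun h => absurd h hα⟩
    choose d hd using hch
    refine ⟨N, ∑ α ∈ f.support, monomial α (d α), ?_⟩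
    apply MvPolynomial.ext
    intro β
    rw [coeff_C_mul, coeff_map, coeff_sum]
    simp only [coeff_monomial]
    rw [show (∑ x ∈ f.support, if x = β then d x else 0)
        = ∑ x ∈ f.support, if x = β then d β else 0 from
      Finset.sum_congr rfl (fun x _ => by
        by_cases hx : x = β
        · subst hx; rfl
        · simp [hx]),
      Finset.sum_ite_eq' f.support β (fun _ => d β)]
    by_cases h : β ∈ f.support
    · rw [if_pos h]; exact hd β h
    · rw [if_neg h, MvPolynomial.notMem_support_iff.1 h]; simp

theorem mem_span_sliceN {σ : Type*} {K : Type*} [Field K]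
    (p : MvPolynomial σ (PowerSeries K)) (W : Submodule K (MvPolynomial σ K))
    (hW : ∀ n, sliceN n p ∈ W) :
    p ∈ Submodule.span (PowerSeries K)
      ((fun w => MvPolynomial.map (PowerSeries.C (R := K)) w) '' (W : Set (MvPolynomial σ K))) := by
  classical
  -- the finite-dimensional space of polynomials supported on `p.support`
  set M : Submodule K (MvPolynomial σ K) :=
    Submodule.span K ((fun α => (monomial α (1 : K) : MvPolynomial σ K)) '' (p.support : Set _))
    with hM
  have hMfd : FiniteDimensional K M :=
    FiniteDimensional.span_of_finite K ((p.support.finite_toSet).image _)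
  have hsliceM : ∀ n, sliceN n p ∈ M := by
    intro n
    rw [MvPolynomial.as_sum (sliceN n p)]
    apply Submodule.sum_mem
    intro α hα
    have hα' : α ∈ p.support := by
      have h1 : coeff α (sliceN n p) ≠ 0 := MvPolynomial.mem_support_iff.1 hα
      rw [coeff_sliceN] at h1
      rw [MvPolynomial.mem_support_iff]
      intro h0
      rw [h0] at h1; simp at h1
    have : (monomial α (coeff α (sliceN n p)) : MvPolynomial σ K)
        = (coeff α (sliceN n p)) • monomial α (1 : K) := by
      rw [MvPolynomial.smul_monomial, smul_eq_mul, mul_one]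
    rw [this]
    exact Submodule.smul_mem _ _ (Submodule.subset_span ⟨α, hα', rfl⟩)
  -- the span of all slices
  set U : Submodule K (MvPolynomial σ K) := Submodule.span K (Set.range fun n => sliceN n p)
    with hU
  have hUM : U ≤ M := Submodule.span_le.2 (by rintro _ ⟨n, rfl⟩; exact hsliceM n)
  have hUW : U ≤ W := Submodule.span_le.2 (by rintro _ ⟨n, rfl⟩; exact hW n)
  haveI : FiniteDimensional K U := Submodule.finiteDimensional_of_le hUM
  set b := Module.finBasis K U with hb
  set wU : ℕ → U := fun n => ⟨sliceN n p, Submodule.subset_span (Set.mem_range_self n)⟩ with hwU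
  set u : Fin (Module.finrank K U) → PowerSeries K :=
    fun k => PowerSeries.mk fun n => b.repr (wU n) k with hu
  have hPsum : p = ∑ k, u k • ((b k : MvPolynomial σ K).map (PowerSeries.C (R := K))) := by
    apply MvPolynomial.ext
    intro β
    ext n
    have hL : PowerSeries.coeff (R := K) n (coeff β p) = coeff β (sliceN n p) := (coeff_sliceN n p β).symm
    rw [hL]
    have hsum := b.sum_repr (wU n)
    have hcoe : ((∑ k, b.repr (wU n) k • b k : U) : MvPolynomial σ K)
        = ∑ k, b.repr (wU n) k • (b k : MvPolynomial σ K) := by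
      push_cast [Submodule.coe_sum]
      rfl
    have hval : (sliceN n p) = ∑ k, b.repr (wU n) k • (b k : MvPolynomial σ K) := by
      rw [← hcoe, hsum]
    rw [hval]
    simp only [MvPolynomial.coeff_sum, MvPolynomial.coeff_smul, MvPolynomial.coeff_map,
      smul_eq_mul, map_sum, PowerSeries.coeff_mul_C, hu, PowerSeries.coeff_mk]
  rw [hPsum]
  apply Submodule.sum_mem
  intro k _
  apply Submodule.smul_mem
  exact Submodule.subset_span ⟨(b k : MvPolynomial σ K), hUW (b k).2, rfl⟩
end Stmt12Aux

/-- Let `K₁` be an infinite field and `G ≤ GL_n` a connected linear algebraic group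
over `K₁` (with `K₁` perfect or `G` reductive, so that `G(K₁)` is Zariski-dense in `G`; this
density, which is the only consequence of these hypotheses used, is hypothesis `hdense` below).
We view `G ⊆ GL_n ⊆ 𝔸^m` (`m = n²+1`) as the closed subvariety cut out by the set of polynomials
`IG` over `K₁`.  Let `K₂/K₁` be a field extension and let `H ⊆ G` be a closed subvariety defined
over `K₂((t))`, cut out inside `G` by polynomials `IH` over `K₂((t))`.  If every `g ∈ G(K₁)` is
the constant term of a `K₂[[t]]`-point of `H`, then `H = G` (as subvarieties of the affine space
over the algebraic closure of `K₂((t))`). -/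
theorem stmt12 (K₁ : Type) [Field K₁] [Infinite K₁]
    (K₂ : Type) [Field K₂] [Algebra K₁ K₂] (m : ℕ)
    (IG : Set (MvPolynomial (Fin m) K₁))
    (IH : Set (MvPolynomial (Fin m) (LaurentSeries K₂)))
    -- the `K₁`-rational points of `G`
    (GK1 : Set (Fin m → K₁)) (hGK1 : GK1 = {g | ∀ q ∈ IG, MvPolynomial.eval g q = 0})
    -- the points of `G` over the algebraic closure of `K₂((t))`
    (GKt : Set (Fin m → Kt K₂))
    (hGKt : GKt = {x | ∀ q ∈ IG,
      MvPolynomial.eval x (q.map ((k2ToKt K₂).comp (algebraMap K₁ K₂))) = 0})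
    -- the points of the closed subvariety `H ⊆ G`, defined over `K₂((t))`
    (HKt : Set (Fin m → Kt K₂))
    (hHKt : HKt = {x | x ∈ GKt ∧ ∀ f ∈ IH,
      MvPolynomial.eval x (f.map (algebraMap (LaurentSeries K₂) (Kt K₂))) = 0})
    -- `G(K₁)` is Zariski-dense in `G` (a consequence of `G` being connected and
    -- `K₁` perfect or `G` reductive)
    (hdense : ∀ f : MvPolynomial (Fin m) (Kt K₂),
      (∀ g ∈ GK1, MvPolynomial.eval (fun j => (k2ToKt K₂) (algebraMap K₁ K₂ (g j))) f = 0) →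
      ∀ x ∈ GKt, MvPolynomial.eval x f = 0)
    -- every `K₁`-point of `G` is the constant term of a `K₂[[t]]`-point of `H`
    (hlift : ∀ g ∈ GK1, ∃ h : Fin m → PowerSeries K₂,
      (∀ j, PowerSeries.constantCoeff (R := K₂) (h j) = algebraMap K₁ K₂ (g j)) ∧
      (fun j => psToKt K₂ (h j)) ∈ HKt) :
    HKt = GKt := by
  classical
  have hHsubG : HKt ⊆ GKt := by rw [hHKt]; intro x hx; exact hx.1
  apply Set.Subset.antisymm hHsubG
  intro x hx
  rw [hHKt]
  refine ⟨hx, fun f hf => ?_⟩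
  -- preliminaries
  have hψinj : Function.Injective (psToKt K₂) :=
    (algebraMap (LaurentSeries K₂) (Kt K₂)).injective.comp HahnSeries.ofPowerSeries_injective
  have hcomp : (algebraMap (LaurentSeries K₂) (Kt K₂)).comp (HahnSeries.ofPowerSeries ℤ K₂)
      = psToKt K₂ := rfl
  have hcomp2 : (psToKt K₂).comp (PowerSeries.C (R := K₂)) = k2ToKt K₂ := rfl
  have hXne : psToKt K₂ PowerSeries.X ≠ 0 := by
    intro h
    exact PowerSeries.X_ne_zero (hψinj (h.trans (map_zero (psToKt K₂)).symm))
  -- the submodule of polynomials over K₂ vanishing on GKt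
  set W : Submodule K₂ (MvPolynomial (Fin m) K₂) :=
    { carrier := {w | ∀ y ∈ GKt, MvPolynomial.eval y (w.map (k2ToKt K₂)) = 0}
      add_mem' := fun {a b} ha hb y hy => by
        rw [map_add, map_add, ha y hy, hb y hy, add_zero]
      zero_mem' := fun y hy => by simp
      smul_mem' := fun c {w} hw y hy => by
        rw [MvPolynomial.smul_eq_C_mul, map_mul, MvPolynomial.map_C, map_mul,
          hw y hy, mul_zero] } with hW
  -- decompose f as a power of t times a polynomial with power series coefficients
  obtain ⟨N, P, hfP⟩ := Stmt12Aux.exists_laurent_decomp f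
  have hune : (algebraMap (LaurentSeries K₂) (Kt K₂)) (HahnSeries.single N 1) ≠ 0 := by
    intro h
    exact HahnSeries.single_ne_zero one_ne_zero
      ((algebraMap (LaurentSeries K₂) (Kt K₂)).injective
        (h.trans (map_zero (algebraMap (LaurentSeries K₂) (Kt K₂))).symm))
  -- choose lifts
  choose hfun hconst hmem using hlift
  -- Claim C: if a power series polynomial vanishes at all chosen lift points, then its
  -- constant slice vanishes on all of GKt.
  have claimC : ∀ R : MvPolynomial (Fin m) (PowerSeries K₂),
      (∀ g (hg : g ∈ GK1),
        MvPolynomial.eval (fun j => psToKt K₂ (hfun g hg j)) (R.map (psToKt K₂)) = 0) →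
      (R.map (PowerSeries.constantCoeff (R := K₂))) ∈ W := by
    intro R hR
    have hvan : ∀ g ∈ GK1,
        MvPolynomial.eval (fun j => k2ToKt K₂ (algebraMap K₁ K₂ (g j)))
          ((R.map (PowerSeries.constantCoeff (R := K₂))).map (k2ToKt K₂)) = 0 := by
      intro g hg
      have hE : MvPolynomial.eval (hfun g hg) R = 0 := by
        apply hψinj
        rw [map_zero, Stmt12Aux.hom_eval (psToKt K₂) (hfun g hg) R]
        exact hR g hg
      have h0 : MvPolynomial.eval (fun j => algebraMap K₁ K₂ (g j))
          (R.map (PowerSeries.constantCoeff (R := K₂))) = 0 := by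
        have h1 := Stmt12Aux.hom_eval (PowerSeries.constantCoeff (R := K₂)) (hfun g hg) R
        rw [hE, map_zero] at h1
        have h2 : ((PowerSeries.constantCoeff (R := K₂)) ∘ (hfun g hg))
            = fun j => algebraMap K₁ K₂ (g j) := funext fun j => hconst g hg j
        rw [h2] at h1
        exact h1.symm
      have h3 := Stmt12Aux.hom_eval (k2ToKt K₂) (fun j => algebraMap K₁ K₂ (g j))
        (R.map (PowerSeries.constantCoeff (R := K₂)))
      rw [h0, map_zero] at h3
      exact h3.symm
    exact fun y hy => hdense _ hvan y hy
  -- the chosen lift points lie in GKt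
  have hmemG : ∀ g (hg : g ∈ GK1), (fun j => psToKt K₂ (hfun g hg j)) ∈ GKt :=
    fun g hg => hHsubG (hmem g hg)
  -- Key induction: every t-shift of P vanishes at all chosen lift points.
  have key : ∀ n : ℕ, ∀ g (hg : g ∈ GK1),
      MvPolynomial.eval (fun j => psToKt K₂ (hfun g hg j))
        ((Stmt12Aux.pShift^[n] P).map (psToKt K₂)) = 0 := by
    intro n
    induction n with
    | zero =>
      intro g hg
      have hH := hmem g hg
      rw [hHKt] at hH
      have h0 := hH.2 f hf
      rw [hfP, map_mul, MvPolynomial.map_C, MvPolynomial.map_map, hcomp,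
        map_mul, MvPolynomial.eval_C] at h0
      rw [Function.iterate_zero_apply]
      exact (mul_eq_zero.1 h0).resolve_left hune
    | succ n ih =>
      intro g hg
      set y := fun j => psToKt K₂ (hfun g hg j) with hy
      have hWn : ((Stmt12Aux.pShift^[n] P).map (PowerSeries.constantCoeff (R := K₂))) ∈ W :=
        claimC _ ih
      have hdec := congrArg (fun q => MvPolynomial.eval y (q.map (psToKt K₂)))
        (Stmt12Aux.pShift_decomp (Stmt12Aux.pShift^[n] P))
      simp only [map_add, map_mul, MvPolynomial.map_C,
        MvPolynomial.map_map, map_add, map_mul, MvPolynomial.eval_C] at hdec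
      have hhom : (psToKt K₂).comp ((PowerSeries.C (R := K₂)).comp (PowerSeries.constantCoeff (R := K₂)))
          = (k2ToKt K₂).comp (PowerSeries.constantCoeff (R := K₂)) := RingHom.ext fun a => rfl
      rw [hhom] at hdec
      have h1 : (MvPolynomial.eval y) ((MvPolynomial.map
          ((k2ToKt K₂).comp (PowerSeries.constantCoeff (R := K₂)))) (Stmt12Aux.pShift^[n] P)) = 0 := by
        rw [← MvPolynomial.map_map]
        exact hWn y (hmemG g hg)
      rw [ih g hg, h1, zero_add] at hdec
      rw [Function.iterate_succ_apply']
      exact (mul_eq_zero.1 hdec).resolve_left hXne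
  -- hence all slices of P vanish on GKt
  have hWn : ∀ n, Stmt12Aux.sliceN n P ∈ W := fun n => claimC _ (key n)
  have hspan := Stmt12Aux.mem_span_sliceN P W hWn
  -- evaluation at x kills the span
  have hev : ∀ p ∈ Submodule.span (PowerSeries K₂)
      ((fun w => MvPolynomial.map (PowerSeries.C (R := K₂)) w) '' (W : Set (MvPolynomial (Fin m) K₂))),
      MvPolynomial.eval x (p.map (psToKt K₂)) = 0 := by
    intro p hp
    induction hp using Submodule.span_induction with
    | mem q hq =>
      obtain ⟨w, hwW, rfl⟩ := hq
      rw [MvPolynomial.map_map, hcomp2]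
      exact hwW x hx
    | zero => simp
    | add q r _ _ hq hr => rw [map_add, map_add, hq, hr, add_zero]
    | smul a q _ hq =>
      rw [MvPolynomial.smul_eq_C_mul, map_mul, MvPolynomial.map_C, map_mul, hq,
        mul_zero]
  have hPev := hev P hspan
  rw [hfP, map_mul, MvPolynomial.map_C, MvPolynomial.map_map, hcomp,
    map_mul, MvPolynomial.eval_C, hPev, mul_zero]
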